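/- Suppose F₂ is atomless conditionally to F₁. Then there exists an increasing family of F₂-measurable sets (B_t)_{t ∈ [0,1]} such that E[1_{B_t} | F₁] = t almost surely for every t ∈ [0,1]; the σ-algebra B generated by the family (B_t)_t is independent of F₁; and there exists an F₂-measurable random variable U, uniformly distributed on [0, 1] and independent of F₁, such that B_t = {U ≤ t} up to null sets for every t. -/

import Mathlib

open MeasureTheory

/-- `F₂` is atomless conditionally to `F₁`: for every `A ∈ F₂` there is `B ∈ F₂`, `B ⊆ A`,
with `0 < E[1_B | F₁] < E[1_A | F₁]` almost surely on the set `{E[1_A | F₁] > 0}`. -/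
def CondAtomless {Ω : Type*} (m1 m2 : MeasurableSpace Ω) (μ : @Measure Ω m2) : Prop :=
  ∀ A : Set Ω, MeasurableSet[m2] A →
    ∃ B : Set Ω, MeasurableSet[m2] B ∧ B ⊆ A ∧
      ∀ᵐ ω ∂μ, 0 < (μ[A.indicator (fun _ => (1 : ℝ)) | m1]) ω →
        0 < (μ[B.indicator (fun _ => (1 : ℝ)) | m1]) ω ∧
        (μ[B.indicator (fun _ => (1 : ℝ)) | m1]) ω <
          (μ[A.indicator (fun _ => (1 : ℝ)) | m1]) ω


open Set Filter
open scoped ENNReal Topology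

namespace CAux

variable {Ω : Type*} {m1 m2 : MeasurableSpace Ω}

noncomputable def ce (μ : @Measure Ω m2) (A : Set Ω) : Ω → ℝ :=
  μ[A.indicator (fun _ => (1 : ℝ)) | m1]

variable (hm : m1 ≤ m2) (μ : @Measure Ω m2) [IsProbabilityMeasure μ]
include hm
set_option linter.unusedSectionVars false

lemma intInd {A : Set Ω} (hA : MeasurableSet[m2] A) :
    Integrable (A.indicator fun _ => (1 : ℝ)) μ :=
  (integrable_const (1 : ℝ)).indicator hA

lemma ce_nonneg (A : Set Ω) : 0 ≤ᵐ[μ] ce (m1 := m1) μ A :=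
  condExp_nonneg (Eventually.of_forall fun ω => Set.indicator_nonneg (fun _ _ => zero_le_one) ω)

lemma sm_ce (A : Set Ω) : StronglyMeasurable[m1] (ce (m1 := m1) μ A) :=
  stronglyMeasurable_condExp

lemma integrable_ce (A : Set Ω) : Integrable (ce (m1 := m1) μ A) μ :=
  integrable_condExp

lemma ce_le_one {A : Set Ω} (hA : MeasurableSet[m2] A) :
    ce (m1 := m1) μ A ≤ᵐ[μ] fun _ => (1 : ℝ) := by
  have h := condExp_mono (m := m1) (intInd hm μ hA) (integrable_const (1 : ℝ))
    (Eventually.of_forall fun ω => Set.indicator_le_self' (fun _ _ => zero_le_one) ω)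
  calc ce (m1 := m1) μ A ≤ᵐ[μ] μ[(fun _ => (1:ℝ)) | m1] := h
    _ =ᵐ[μ] fun _ => (1:ℝ) := by rw [condExp_const hm]

lemma integral_ce {A : Set Ω} (hA : MeasurableSet[m2] A) :
    ∫ ω, ce (m1 := m1) μ A ω ∂μ = (μ A).toReal := by
  rw [ce, integral_condExp hm, integral_indicator hA, setIntegral_const, smul_eq_mul, mul_one,
    measureReal_def]

lemma setIntegral_ce {A G : Set Ω} (hA : MeasurableSet[m2] A) (hG : MeasurableSet[m1] G) :
    ∫ ω in G, ce (m1 := m1) μ A ω ∂μ = (μ (A ∩ G)).toReal := by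
  rw [ce, setIntegral_condExp hm (intInd hm μ hA) hG,
    integral_indicator hA, Measure.restrict_restrict hA, setIntegral_const, smul_eq_mul, mul_one,
    measureReal_def]

lemma ce_empty : ce (m1 := m1) μ (∅ : Set Ω) = 0 := by
  rw [ce, Set.indicator_empty]; exact condExp_zero

lemma ce_univ : ce (m1 := m1) μ (univ : Set Ω) =ᵐ[μ] fun _ => (1 : ℝ) := by
  rw [ce, Set.indicator_univ, condExp_const hm]

lemma ce_union {A B : Set Ω} (hA : MeasurableSet[m2] A) (hB : MeasurableSet[m2] B)
    (hd : Disjoint A B) :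
    ce (m1 := m1) μ (A ∪ B) =ᵐ[μ] ce (m1 := m1) μ A + ce (m1 := m1) μ B := by
  have : (A ∪ B).indicator (fun _ => (1:ℝ)) =
      A.indicator (fun _ => (1:ℝ)) + B.indicator (fun _ => (1:ℝ)) :=
    Set.indicator_union_of_disjoint hd _
  rw [ce, this]
  exact condExp_add (intInd hm μ hA) (intInd hm μ hB) m1

lemma ce_mono {A B : Set Ω} (hA : MeasurableSet[m2] A) (hB : MeasurableSet[m2] B)
    (h : A ⊆ B) : ce (m1 := m1) μ A ≤ᵐ[μ] ce (m1 := m1) μ B :=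
  condExp_mono (intInd hm μ hA) (intInd hm μ hB)
    (Eventually.of_forall fun ω => Set.indicator_le_indicator_of_subset h (fun _ => zero_le_one) ω)

lemma ce_diff {A B : Set Ω} (hA : MeasurableSet[m2] A) (hB : MeasurableSet[m2] B)
    (h : B ⊆ A) :
    ce (m1 := m1) μ (A \ B) =ᵐ[μ] ce (m1 := m1) μ A - ce (m1 := m1) μ B := by
  have h1 : ce (m1 := m1) μ (B ∪ (A \ B)) =ᵐ[μ] ce (m1 := m1) μ B + ce (m1 := m1) μ (A \ B) :=
    ce_union hm μ hB (hA.diff hB) disjoint_sdiff_right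
  rw [Set.union_diff_cancel h] at h1
  filter_upwards [h1] with ω hω
  simp only [Pi.sub_apply, Pi.add_apply] at *
  linarith

lemma ce_inter_m1 {C H : Set Ω} (hC : MeasurableSet[m2] C) (hH : MeasurableSet[m1] H) :
    ce (m1 := m1) μ (C ∩ H) =ᵐ[μ]
      fun ω => H.indicator (fun _ => (1:ℝ)) ω * ce (m1 := m1) μ C ω := by
  have hsm : StronglyMeasurable[m1] (H.indicator (fun _ => (1:ℝ))) :=
    (stronglyMeasurable_const.indicator hH)
  have hind : (C ∩ H).indicator (fun _ => (1:ℝ)) =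
      (H.indicator (fun _ => (1:ℝ))) * (C.indicator (fun _ => (1:ℝ))) := by
    ext ω
    by_cases h1 : ω ∈ C <;> by_cases h2 : ω ∈ H <;>
      simp [Set.indicator_apply, h1, h2, Set.mem_inter_iff]
  have hint : Integrable ((H.indicator (fun _ => (1:ℝ))) * (C.indicator (fun _ => (1:ℝ)))) μ := by
    rw [← hind]; exact intInd hm μ (hC.inter (hm _ hH))
  calc ce (m1 := m1) μ (C ∩ H)
      = μ[(H.indicator (fun _ => (1:ℝ))) * (C.indicator (fun _ => (1:ℝ))) | m1] := by
        rw [ce, hind]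
    _ =ᵐ[μ] (H.indicator (fun _ => (1:ℝ))) * μ[(C.indicator (fun _ => (1:ℝ))) | m1] :=
        condExp_mul_of_stronglyMeasurable_left hsm hint (intInd hm μ hC)
    _ = fun ω => H.indicator (fun _ => (1:ℝ)) ω * ce (m1 := m1) μ C ω := rfl

/-- comparison of `m1`-measurable functions via set integrals -/
lemma ae_le_of_setIntegral {f g : Ω → ℝ} (hf : StronglyMeasurable[m1] f)
    (hg : StronglyMeasurable[m1] g) (hfi : Integrable f μ) (hgi : Integrable g μ)
    (h : ∀ s, MeasurableSet[m1] s → ∫ ω in s, f ω ∂μ ≤ ∫ ω in s, g ω ∂μ) :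
    f ≤ᵐ[μ] g := by
  have hsub : StronglyMeasurable[m1] (g - f) := hg.sub hf
  have hint : Integrable (g - f) μ := hgi.sub hfi
  have htrim : Integrable (g - f) (μ.trim hm) := hint.trim hm hsub
  have h0 : 0 ≤ᵐ[μ.trim hm] (g - f) := by
    refine ae_nonneg_of_forall_setIntegral_nonneg htrim fun s hs _ => ?_
    rw [← setIntegral_trim hm hsub hs]
    have := h s hs
    have hfs : Integrable f (μ.restrict s) := hfi.restrict
    have hgs : Integrable g (μ.restrict s) := hgi.restrict
    have heq : ∫ x in s, (g - f) x ∂μ = (∫ ω in s, g ω ∂μ) - ∫ ω in s, f ω ∂μ := by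
      simp only [Pi.sub_apply]
      exact integral_sub hgs hfs
    rw [heq]
    linarith
  have h0' : 0 ≤ᵐ[μ] (g - f) := ae_le_of_ae_le_trim h0
  filter_upwards [h0'] with ω hω
  have : (0:ℝ) ≤ g ω - f ω := hω
  linarith


/-- `ce` of a monotone countable union is a.e. bounded by any `m1`-measurable bound of the pieces -/
lemma ce_iUnion_le_aux (f : ℕ → Set Ω) (hmeas : ∀ n, MeasurableSet[m2] (f n))
    (hmono : Monotone f) {g : Ω → ℝ} (hgsm : StronglyMeasurable[m1] g)
    (hgi : Integrable g μ) (hle : ∀ n, ce (m1 := m1) μ (f n) ≤ᵐ[μ] g) :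
    ce (m1 := m1) μ (⋃ n, f n) ≤ᵐ[μ] g := by
  have hT : MeasurableSet[m2] (⋃ n, f n) := MeasurableSet.iUnion hmeas
  refine ae_le_of_setIntegral hm μ (sm_ce hm μ _) hgsm (integrable_ce hm μ _) hgi fun s hs => ?_
  rw [setIntegral_ce hm μ hT hs]
  have hlim : Tendsto (fun n => μ (f n ∩ s)) atTop (nhds (μ ((⋃ n, f n) ∩ s))) := by
    have : (⋃ n, f n) ∩ s = ⋃ n, f n ∩ s := by rw [Set.iUnion_inter]
    rw [this]
    exact tendsto_measure_iUnion_atTop (fun a b hab => Set.inter_subset_inter_left s (hmono hab))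
  have hlim' : Tendsto (fun n => (μ (f n ∩ s)).toReal) atTop
      (nhds ((μ ((⋃ n, f n) ∩ s)).toReal)) :=
    (ENNReal.tendsto_toReal (measure_ne_top μ _)).comp hlim
  refine le_of_tendsto hlim' (Eventually.of_forall fun n => ?_)
  rw [← setIntegral_ce hm μ (hmeas n) hs]
  refine setIntegral_mono_ae (integrable_ce hm μ _).restrict hgi.restrict ?_
  exact hle n

/-- a function a.e. above a constant whose integral equals that constant is a.e. that constant -/
lemma ae_eq_const_of_ae_le {f : Ω → ℝ} {c : ℝ} (hfi : Integrable f μ)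
    (hle : ∀ᵐ ω ∂μ, c ≤ f ω) (hint : ∫ ω, f ω ∂μ = c) :
    f =ᵐ[μ] fun _ => c := by
  have h1 : ∀ᵐ ω ∂μ, 0 ≤ f ω - c := by filter_upwards [hle] with ω hω; linarith
  have h2 : ∫ ω, (f ω - c) ∂μ = 0 := by
    rw [integral_sub hfi (integrable_const c), hint, integral_const]
    simp
  have h3 : (fun ω => f ω - c) =ᵐ[μ] 0 :=
    (integral_eq_zero_iff_of_nonneg_ae h1 (hfi.sub (integrable_const c))).mp h2
  filter_upwards [h3] with ω hω
  have : f ω - c = 0 := hω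
  linarith

lemma halving (hca : CondAtomless m1 m2 μ) {C : Set Ω} (hC : MeasurableSet[m2] C) :
    ∃ C', MeasurableSet[m2] C' ∧ C' ⊆ C ∧
      ∀ᵐ ω ∂μ, 0 < ce (m1 := m1) μ C ω →
        (0 < ce (m1 := m1) μ C' ω ∧ ce (m1 := m1) μ C' ω ≤ ce (m1 := m1) μ C ω / 2) := by
  obtain ⟨B, hB, hBC, hae⟩ := hca C hC
  set H : Set Ω := {ω | ce (m1 := m1) μ B ω ≤ ce (m1 := m1) μ C ω / 2} with hHdef
  have hH : MeasurableSet[m1] H := by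
    exact measurableSet_le (sm_ce hm μ B).measurable ((sm_ce hm μ C).measurable.div_const 2)
  refine ⟨(B ∩ H) ∪ ((C \ B) ∩ Hᶜ), ?_, ?_, ?_⟩
  · exact ((hB.inter (hm _ hH)).union ((hC.diff hB).inter (hm _ hH.compl)))
  · exact Set.union_subset (Set.inter_subset_left.trans hBC)
      (Set.inter_subset_left.trans Set.diff_subset)
  · have hdisj : Disjoint (B ∩ H) ((C \ B) ∩ Hᶜ) :=
      (disjoint_sdiff_right.mono Set.inter_subset_left Set.inter_subset_left)
    have h1 := ce_union hm μ (hB.inter (hm _ hH)) ((hC.diff hB).inter (hm _ hH.compl)) hdisj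
    have h2 := ce_inter_m1 hm μ hB hH
    have h3 := ce_inter_m1 hm μ (hC.diff hB) hH.compl
    have h4 := ce_diff hm μ hC hB hBC
    filter_upwards [hae, h1, h2, h3, h4] with ω h0 h1 h2 h3 h4 hpos
    obtain ⟨hBpos, hBlt⟩ := h0 hpos
    have hBpos' : 0 < ce (m1 := m1) μ B ω := hBpos
    have hBlt' : ce (m1 := m1) μ B ω < ce (m1 := m1) μ C ω := hBlt
    rw [h1]
    simp only [Pi.add_apply]
    rw [h2, h3]
    have h4' : ce (m1 := m1) μ (C \ B) ω = ce (m1 := m1) μ C ω - ce (m1 := m1) μ B ω := h4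
    by_cases hmem : ω ∈ H
    · rw [Set.indicator_of_mem hmem, Set.indicator_of_notMem (by simpa using hmem : ω ∉ Hᶜ)]
      have hval : ce (m1 := m1) μ B ω ≤ ce (m1 := m1) μ C ω / 2 := hmem
      constructor <;> nlinarith
    · rw [Set.indicator_of_notMem hmem, Set.indicator_of_mem (by simpa using hmem : ω ∈ Hᶜ)]
      have hval : ¬ ce (m1 := m1) μ B ω ≤ ce (m1 := m1) μ C ω / 2 := hmem
      push_neg at hval
      rw [h4']
      constructor <;> nlinarith

lemma small_piece (hca : CondAtomless m1 m2 μ) {C : Set Ω} (hC : MeasurableSet[m2] C) (n : ℕ) :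
    ∃ C', MeasurableSet[m2] C' ∧ C' ⊆ C ∧
      ∀ᵐ ω ∂μ, 0 < ce (m1 := m1) μ C ω →
        (0 < ce (m1 := m1) μ C' ω ∧ ce (m1 := m1) μ C' ω ≤ ce (m1 := m1) μ C ω / 2 ^ n) := by
  induction n with
  | zero =>
    exact ⟨C, hC, subset_rfl, Eventually.of_forall fun ω h => ⟨h, by simp⟩⟩
  | succ n ih =>
    obtain ⟨D, hD, hDC, hae⟩ := ih
    obtain ⟨C', hC', hC'D, hae'⟩ := halving hm μ hca hD
    refine ⟨C', hC', hC'D.trans hDC, ?_⟩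
    filter_upwards [hae, hae'] with ω h1 h2 hpos
    obtain ⟨hDpos, hDle⟩ := h1 hpos
    obtain ⟨h2a, h2b⟩ := h2 hDpos
    refine ⟨h2a, ?_⟩
    have : (0:ℝ) < 2 ^ n := by positivity
    calc ce (m1 := m1) μ C' ω ≤ ce (m1 := m1) μ D ω / 2 := h2b
      _ ≤ (ce (m1 := m1) μ C ω / 2 ^ n) / 2 := by linarith
      _ = ce (m1 := m1) μ C ω / 2 ^ (n + 1) := by ring

lemma split (hca : CondAtomless m1 m2 μ) {A : Set Ω} (hA : MeasurableSet[m2] A) :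
    ∃ B, MeasurableSet[m2] B ∧ B ⊆ A ∧
      ce (m1 := m1) μ B =ᵐ[μ] fun ω => ce (m1 := m1) μ A ω / 2 := by
  classical
  set g : Ω → ℝ := fun ω => ce (m1 := m1) μ A ω / 2 with hgdef
  have hgsm : StronglyMeasurable[m1] g := by
    have : g = fun ω => ce (m1 := m1) μ A ω * (2⁻¹ : ℝ) := by
      funext ω; rw [hgdef]; ring
    rw [this]
    exact (sm_ce hm μ A).mul_const _
  have hgi : Integrable g μ := (integrable_ce hm μ A).div_const 2
  have hg0 : 0 ≤ᵐ[μ] g := by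
    filter_upwards [ce_nonneg hm μ A] with ω h
    have h' : (0:ℝ) ≤ ce (m1 := m1) μ A ω := h
    show (0:ℝ) ≤ ce (m1 := m1) μ A ω / 2
    linarith
  set 𝒟 : Set (Set Ω) := {B | MeasurableSet[m2] B ∧ B ⊆ A ∧ ce (m1 := m1) μ B ≤ᵐ[μ] g}
    with h𝒟
  have hempty : ∅ ∈ 𝒟 := by
    refine ⟨MeasurableSet.empty, Set.empty_subset A, ?_⟩
    rw [ce_empty hm μ]
    exact hg0
  have step : ∀ B : Set Ω, ∃ C : Set Ω, B ∈ 𝒟 →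
      (C ∈ 𝒟 ∧ B ⊆ C ∧ ∀ C' ∈ 𝒟, B ⊆ C' → μ (C' \ B) ≤ 2 * μ (C \ B)) := by
    intro B
    by_cases hB : B ∈ 𝒟
    swap
    · exact ⟨B, fun h => absurd h hB⟩
    set s : ℝ≥0∞ := ⨆ (C : {C : Set Ω // C ∈ 𝒟 ∧ B ⊆ C}), μ (C.1 \ B) with hsdef
    by_cases hs0 : s = 0
    · refine ⟨B, fun _ => ⟨hB, subset_rfl, fun C' hC' hBC' => ?_⟩⟩
      have h1 : μ (C' \ B) ≤ s := le_iSup_of_le ⟨C', hC', hBC'⟩ le_rfl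
      rw [hs0] at h1
      exact h1.trans zero_le
    · have hstop : s ≠ ⊤ := by
        refine ne_top_of_le_ne_top (by simp : (1:ℝ≥0∞) ≠ ⊤) (iSup_le fun C => ?_)
        exact (measure_mono (Set.diff_subset.trans (Set.subset_univ _))).trans
          (le_of_eq (measure_univ))
      have hhalf : s / 2 < s := ENNReal.half_lt_self hs0 hstop
      obtain ⟨⟨C, hC, hBC⟩, hgt⟩ := lt_iSup_iff.mp hhalf
      refine ⟨C, fun _ => ⟨hC, hBC, fun C' hC' hBC' => ?_⟩⟩
      have h1 : μ (C' \ B) ≤ s := le_iSup_of_le ⟨C', hC', hBC'⟩ le_rfl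
      have h2 : s ≤ 2 * μ (C \ B) := by
        calc s = 2 * (s / 2) := by
              rw [ENNReal.mul_div_cancel two_ne_zero ENNReal.ofNat_ne_top]
          _ ≤ 2 * μ (C \ B) := by gcongr
      exact h1.trans h2
  choose F hF using step
  let seq : ℕ → Set Ω := fun n => Nat.rec ∅ (fun _ Bn => F Bn) n
  have hseqS : ∀ n, seq (n + 1) = F (seq n) := fun n => rfl
  have hseqD : ∀ n, seq n ∈ 𝒟 := by
    intro n
    induction n with
    | zero => exact hempty
    | succ n ih => rw [hseqS]; exact (hF (seq n) ih).1
  have hsub : ∀ n, seq n ⊆ seq (n + 1) := fun n => by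
    rw [hseqS]; exact (hF (seq n) (hseqD n)).2.1
  have hmono : Monotone seq := monotone_nat_of_le_succ hsub
  set T : Set Ω := ⋃ n, seq n with hTdef
  have hTmeas : MeasurableSet[m2] T := MeasurableSet.iUnion fun n => (hseqD n).1
  have hTsubA : T ⊆ A := Set.iUnion_subset fun n => (hseqD n).2.1
  have hTce : ce (m1 := m1) μ T ≤ᵐ[μ] g :=
    ce_iUnion_le_aux hm μ seq (fun n => (hseqD n).1) hmono hgsm hgi (fun n => (hseqD n).2.2)
  have hTD : T ∈ 𝒟 := ⟨hTmeas, hTsubA, hTce⟩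
  -- gains tend to zero
  have hdisjG : Pairwise (Function.onFun Disjoint fun n => seq (n + 1) \ seq n) := by
    intro a b hab
    rcases hab.lt_or_gt with h | h
    · exact disjoint_sdiff_right.mono_left (Set.diff_subset.trans (hmono (Nat.succ_le_of_lt h)))
    · exact (disjoint_sdiff_right.mono_left
        (Set.diff_subset.trans (hmono (Nat.succ_le_of_lt h)))).symm
  have hsum : (∑' n, μ (seq (n + 1) \ seq n)) ≠ ⊤ := by
    rw [← measure_iUnion hdisjG fun n => ((hseqD (n+1)).1).diff ((hseqD n).1)]
    exact measure_ne_top μ _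
  have hto0 : Tendsto (fun n => μ (seq (n + 1) \ seq n)) atTop (nhds 0) :=
    ENNReal.tendsto_atTop_zero_of_tsum_ne_top hsum
  have hmax : ∀ C' ∈ 𝒟, T ⊆ C' → μ (C' \ T) = 0 := by
    intro C' hC' hTC'
    have hbound : ∀ n, μ (C' \ T) ≤ 2 * μ (seq (n + 1) \ seq n) := by
      intro n
      have h1 : μ (C' \ T) ≤ μ (C' \ seq n) :=
        measure_mono (Set.diff_subset_diff_right (Set.subset_iUnion seq n))
      have h2 := (hF (seq n) (hseqD n)).2.2 C' hC'
        ((Set.subset_iUnion seq n).trans hTC')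
      rw [← hseqS n] at h2
      exact h1.trans h2
    have h2 : Tendsto (fun n => 2 * μ (seq (n + 1) \ seq n)) atTop (nhds 0) := by
      have := ENNReal.Tendsto.const_mul hto0 (Or.inr (ENNReal.ofNat_ne_top (n := 2)))
      simpa using this
    have h3 : μ (C' \ T) ≤ 0 := ge_of_tendsto' h2 hbound
    exact le_antisymm h3 zero_le
  -- final step
  refine ⟨T, hTmeas, hTsubA, ?_⟩
  by_contra hne
  set D : Set Ω := {ω | ce (m1 := m1) μ T ω < g ω} with hDdef
  have hDm1 : MeasurableSet[m1] D := measurableSet_lt (sm_ce hm μ T).measurable hgsm.measurable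
  have hDpos : μ D ≠ 0 := by
    intro h0
    apply hne
    have hnm : ∀ᵐ ω ∂μ, ω ∉ D := measure_eq_zero_iff_ae_notMem.mp h0
    filter_upwards [hTce, hnm] with ω h1 h2
    exact le_antisymm h1 (not_lt.mp h2)
  set A' : Set Ω := A \ T with hA'def
  have hA'm : MeasurableSet[m2] A' := hA.diff hTmeas
  have hA'ce : ce (m1 := m1) μ A' =ᵐ[μ] ce (m1 := m1) μ A - ce (m1 := m1) μ T :=
    ce_diff hm μ hA hTmeas hTsubA
  have hpieces := fun n => small_piece hm μ hca hA'm n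
  choose Cp hCpm hCpsub hCpae using hpieces
  set Dn : ℕ → Set Ω := fun n => D ∩ {ω | (1:ℝ)/2^n ≤ g ω - ce (m1 := m1) μ T ω} with hDndef
  have hDnm1 : ∀ n, MeasurableSet[m1] (Dn n) := fun n =>
    hDm1.inter (measurableSet_le measurable_const
      (hgsm.measurable.sub (sm_ce hm μ T).measurable))
  have hDnD : ∀ n, Dn n ⊆ D := fun n => Set.inter_subset_left
  have hDcover : D = ⋃ n, Dn n := by
    ext ω
    constructor
    · intro hω
      have hlt : 0 < g ω - ce (m1 := m1) μ T ω := sub_pos.mpr hω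
      obtain ⟨n, hn⟩ := exists_pow_lt_of_lt_one hlt (by norm_num : (1:ℝ)/2 < 1)
      refine Set.mem_iUnion.mpr ⟨n, hω, ?_⟩
      have : ((1:ℝ)/2)^n = 1/2^n := by rw [div_pow, one_pow]
      rw [this] at hn
      exact hn.le
    · intro hω
      obtain ⟨n, hn⟩ := Set.mem_iUnion.mp hω
      exact hn.1
  have hex : ∃ n, μ (Dn n) ≠ 0 := by
    by_contra h
    push_neg at h
    refine hDpos ?_
    rw [hDcover]
    exact measure_iUnion_null h
  obtain ⟨n, hDnpos⟩ := hex
  set E : Set Ω := T ∪ (Cp n ∩ Dn n) with hEdef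
  have hCpDm : MeasurableSet[m2] (Cp n ∩ Dn n) := (hCpm n).inter (hm _ (hDnm1 n))
  have hEm : MeasurableSet[m2] E := hTmeas.union hCpDm
  have hEsub : E ⊆ A := Set.union_subset hTsubA
    (Set.inter_subset_left.trans ((hCpsub n).trans Set.diff_subset))
  have hdisjTC : Disjoint T (Cp n ∩ Dn n) :=
    Disjoint.mono le_rfl (Set.inter_subset_left.trans (hCpsub n)) disjoint_sdiff_right
  have hEce1 : ce (m1 := m1) μ E =ᵐ[μ] ce (m1 := m1) μ T + ce (m1 := m1) μ (Cp n ∩ Dn n) :=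
    ce_union hm μ hTmeas hCpDm hdisjTC
  have hEce2 : ce (m1 := m1) μ (Cp n ∩ Dn n) =ᵐ[μ]
      fun ω => (Dn n).indicator (fun _ => (1:ℝ)) ω * ce (m1 := m1) μ (Cp n) ω :=
    ce_inter_m1 hm μ (hCpm n) (hDnm1 n)
  have haepos : ∀ᵐ ω ∂μ, ω ∈ D → 0 < ce (m1 := m1) μ A' ω := by
    filter_upwards [hA'ce, ce_nonneg hm μ T] with ω h1 h2 hω
    have h1' : ce (m1 := m1) μ A' ω = ce (m1 := m1) μ A ω - ce (m1 := m1) μ T ω := h1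
    have hω' : ce (m1 := m1) μ T ω < g ω := hω
    have h2' : (0:ℝ) ≤ ce (m1 := m1) μ T ω := h2
    have hgval : g ω = ce (m1 := m1) μ A ω / 2 := rfl
    nlinarith
  have hEle : ce (m1 := m1) μ E ≤ᵐ[μ] g := by
    filter_upwards [hEce1, hEce2, hTce, hCpae n, haepos, ce_le_one hm μ hA'm] with
      ω h1 h2 h3 h4 h5 h6
    have h1' : ce (m1 := m1) μ E ω
        = ce (m1 := m1) μ T ω + ce (m1 := m1) μ (Cp n ∩ Dn n) ω := h1
    rw [h1', h2]
    by_cases hmem : ω ∈ Dn n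
    · have hD' : ω ∈ D := hDnD n hmem
      obtain ⟨hpos, hle⟩ := h4 (h5 hD')
      rw [Set.indicator_of_mem hmem]
      have hbd : (1:ℝ)/2^n ≤ g ω - ce (m1 := m1) μ T ω := hmem.2
      have h6' : ce (m1 := m1) μ A' ω ≤ 1 := h6
      have hp2 : (0:ℝ) < 2^n := by positivity
      have : ce (m1 := m1) μ (Cp n) ω ≤ 1/2^n := by
        calc ce (m1 := m1) μ (Cp n) ω ≤ ce (m1 := m1) μ A' ω / 2^n := hle
          _ ≤ 1/2^n := by gcongr
      have := this.trans hbd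
      linarith [mul_one (ce (m1 := m1) μ (Cp n) ω)]
    · rw [Set.indicator_of_notMem hmem]
      simpa using h3
  have hED : E ∈ 𝒟 := ⟨hEm, hEsub, hEle⟩
  have h0 : μ (E \ T) = 0 := hmax E hED Set.subset_union_left
  have hETeq : E \ T = Cp n ∩ Dn n := by
    rw [hEdef, Set.union_diff_left]
    exact Disjoint.sdiff_eq_left hdisjTC.symm
  rw [hETeq] at h0
  -- but the measure must be positive
  have hint : (μ (Cp n ∩ Dn n)).toReal = ∫ ω in Dn n, ce (m1 := m1) μ (Cp n) ω ∂μ :=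
    (setIntegral_ce hm μ (hCpm n) (hDnm1 n)).symm
  have hposint : 0 < ∫ ω in Dn n, ce (m1 := m1) μ (Cp n) ω ∂μ := by
    rw [setIntegral_pos_iff_support_of_nonneg_ae
      (ae_restrict_of_ae (ce_nonneg hm μ (Cp n))) (integrable_ce hm μ (Cp n)).integrableOn]
    have hsup : ∀ᵐ ω ∂μ, ω ∈ Dn n → ω ∈ Function.support (ce (m1 := m1) μ (Cp n)) := by
      filter_upwards [hCpae n, haepos] with ω h1 h2 hω
      obtain ⟨hpos, _⟩ := h1 (h2 (hDnD n hω))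
      exact ne_of_gt hpos
    have hnull : μ (Dn n \ Function.support (ce (m1 := m1) μ (Cp n))) = 0 := by
      have hz := ae_iff.mp hsup
      refine measure_mono_null ?_ hz
      intro ω hω
      simp only [Set.mem_setOf_eq]
      intro himp
      exact hω.2 (himp hω.1)
    have hcover : μ (Dn n) ≤ μ (Function.support (ce (m1 := m1) μ (Cp n)) ∩ Dn n) := by
      calc μ (Dn n) = μ ((Dn n ∩ Function.support (ce (m1 := m1) μ (Cp n)))
              ∪ (Dn n \ Function.support (ce (m1 := m1) μ (Cp n)))) := by
            rw [Set.inter_union_diff]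
        _ ≤ μ (Dn n ∩ Function.support (ce (m1 := m1) μ (Cp n)))
              + μ (Dn n \ Function.support (ce (m1 := m1) μ (Cp n))) := measure_union_le _ _
        _ = μ (Function.support (ce (m1 := m1) μ (Cp n)) ∩ Dn n) := by
            rw [hnull, add_zero, Set.inter_comm]
    exact lt_of_lt_of_le (pos_iff_ne_zero.mpr hDnpos) hcover
  have hfinal : (0:ℝ) < (μ (Cp n ∩ Dn n)).toReal := by rw [hint]; exact hposint
  rw [h0] at hfinal
  simp at hfinal

variable [IsProbabilityMeasure μ]

noncomputable def halfSet (hca : CondAtomless m1 m2 μ) (A : Set Ω) : Set Ω :=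
  @dite _ (MeasurableSet[m2] A) (Classical.dec _)
    (fun h => (split hm μ hca h).choose) (fun _ => ∅)

lemma halfSet_meas (hca : CondAtomless m1 m2 μ) (A : Set Ω) :
    MeasurableSet[m2] (halfSet hm μ hca A) := by
  unfold halfSet
  by_cases h : MeasurableSet[m2] A
  · rw [dif_pos h]; exact (split hm μ hca h).choose_spec.1
  · rw [dif_neg h]; exact MeasurableSet.empty

lemma halfSet_subset (hca : CondAtomless m1 m2 μ) (A : Set Ω) :
    halfSet hm μ hca A ⊆ A := by
  unfold halfSet
  by_cases h : MeasurableSet[m2] A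
  · rw [dif_pos h]; exact (split hm μ hca h).choose_spec.2.1
  · rw [dif_neg h]; exact Set.empty_subset A

lemma halfSet_ce (hca : CondAtomless m1 m2 μ) {A : Set Ω} (hA : MeasurableSet[m2] A) :
    ce (m1 := m1) μ (halfSet hm μ hca A) =ᵐ[μ] fun ω => ce (m1 := m1) μ A ω / 2 := by
  unfold halfSet
  rw [dif_pos hA]
  exact (split hm μ hca hA).choose_spec.2.2

noncomputable def P (hca : CondAtomless m1 m2 μ) : ℕ → ℕ → Set Ω
  | 0, k => if k = 0 then Set.univ else ∅
  | (n+1), k =>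
      if k % 2 = 0 then halfSet hm μ hca (P hca n (k / 2))
      else P hca n (k / 2) \ halfSet hm μ hca (P hca n (k / 2))

variable (hca : CondAtomless m1 m2 μ)

lemma Pmeas : ∀ n k, MeasurableSet[m2] (P hm μ hca n k) := by
  intro n
  induction n with
  | zero =>
    intro k
    by_cases h : k = 0 <;> simp [P, h]
  | succ n ih =>
    intro k
    by_cases h : k % 2 = 0 <;> simp only [P, h, if_true, if_false]
    · exact halfSet_meas hm μ hca _
    · exact (ih (k / 2)).diff (halfSet_meas hm μ hca _)

lemma Pparent (n k : ℕ) : P hm μ hca (n+1) k ⊆ P hm μ hca n (k / 2) := by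
  by_cases h : k % 2 = 0 <;> simp only [P, h, if_true, if_false]
  · exact halfSet_subset hm μ hca _
  · exact Set.diff_subset

lemma Psplit_even (n k : ℕ) : P hm μ hca (n+1) (2*k) = halfSet hm μ hca (P hm μ hca n k) := by
  have h1 : (2*k) % 2 = 0 := by omega
  have h2 : (2*k) / 2 = k := by omega
  simp only [P, h1, if_true, h2]

lemma Psplit_odd (n k : ℕ) :
    P hm μ hca (n+1) (2*k+1) = P hm μ hca n k \ halfSet hm μ hca (P hm μ hca n k) := by
  have h1 : ¬ ((2*k+1) % 2 = 0) := by omega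
  have h2 : (2*k+1) / 2 = k := by omega
  simp only [P, h1, if_false, h2, if_neg h1]

lemma Psplit_union (n k : ℕ) :
    P hm μ hca (n+1) (2*k) ∪ P hm μ hca (n+1) (2*k+1) = P hm μ hca n k := by
  rw [Psplit_even, Psplit_odd]
  exact Set.union_diff_cancel (halfSet_subset hm μ hca _)

lemma Pdisj : ∀ n k l, k ≠ l → Disjoint (P hm μ hca n k) (P hm μ hca n l) := by
  intro n
  induction n with
  | zero =>
    intro k l hkl
    by_cases hk : k = 0 <;> by_cases hl : l = 0 <;> simp [P, hk, hl]
    omega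
  | succ n ih =>
    intro k l hkl
    by_cases hpar : k / 2 = l / 2
    · have hmod : k % 2 ≠ l % 2 := by omega
      by_cases hk2 : k % 2 = 0
      · have hl2 : ¬ (l % 2 = 0) := by omega
        simp only [P, hk2, if_true, hl2, if_false, if_neg hl2, hpar]
        exact disjoint_sdiff_right
      · have hl2 : l % 2 = 0 := by omega
        simp only [P, hk2, if_false, hl2, if_true, if_neg hk2, hpar]
        exact disjoint_sdiff_right.symm
    · exact (ih (k/2) (l/2) hpar).mono (Pparent hm μ hca n k) (Pparent hm μ hca n l)

lemma Pempty : ∀ n k, 2^n ≤ k → P hm μ hca n k = ∅ := by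
  intro n
  induction n with
  | zero =>
    intro k hk
    have : ¬ (k = 0) := by omega
    simp [P, this]
  | succ n ih =>
    intro k hk
    have h2 : 2^(n+1) = 2 * 2^n := by rw [pow_succ]; ring
    have hj : 2^n ≤ k / 2 := by omega
    have hpar : P hm μ hca n (k / 2) = ∅ := ih _ hj
    by_cases h : k % 2 = 0
    · simp only [P, if_pos h]
      exact Set.subset_empty_iff.mp (hpar ▸ halfSet_subset hm μ hca _)
    · simp only [P, if_neg h]
      simp [hpar]

lemma Pce : ∀ n k, k < 2^n →
    ce (m1 := m1) μ (P hm μ hca n k) =ᵐ[μ] fun _ => (1:ℝ)/2^n := by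
  intro n
  induction n with
  | zero =>
    intro k hk
    have : k = 0 := by omega
    subst this
    simp only [P, if_true, pow_zero]
    have := ce_univ hm μ (Ω := Ω)
    filter_upwards [this] with ω h
    simpa using h
  | succ n ih =>
    intro k hk
    have h2 : 2^(n+1) = 2 * 2^n := by rw [pow_succ]; ring
    have hj : k / 2 < 2^n := by omega
    have hce := ih (k/2) hj
    have hhalf := halfSet_ce hm μ hca (Pmeas hm μ hca n (k/2))
    by_cases h : k % 2 = 0
    · simp only [P, if_pos h]
      filter_upwards [hce, hhalf] with ω h1 h2'
      rw [h2', h1, pow_succ]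
      ring
    · simp only [P, if_neg h]
      have hdiff := ce_diff hm μ (Pmeas hm μ hca n (k/2)) (halfSet_meas hm μ hca _)
        (halfSet_subset hm μ hca _)
      filter_upwards [hce, hhalf, hdiff] with ω h1 h2' h3
      have h3' : ce (m1 := m1) μ (P hm μ hca n (k/2) \ halfSet hm μ hca (P hm μ hca n (k/2))) ω
          = ce (m1 := m1) μ (P hm μ hca n (k/2)) ω
            - ce (m1 := m1) μ (halfSet hm μ hca (P hm μ hca n (k/2))) ω := h3
      rw [h3', h2', h1, pow_succ]
      ring

noncomputable def DD (hca : CondAtomless m1 m2 μ) (n k : ℕ) : Set Ω :=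
  ⋃ j ∈ Finset.range k, P hm μ hca n j

lemma DDzero (n : ℕ) : DD hm μ hca n 0 = ∅ := by simp [DD]

lemma DDsucc (n k : ℕ) : DD hm μ hca n (k+1) = DD hm μ hca n k ∪ P hm μ hca n k := by
  rw [DD, DD, Finset.range_add_one, Finset.set_biUnion_insert, Set.union_comm]

lemma DDmeas (n k : ℕ) : MeasurableSet[m2] (DD hm μ hca n k) :=
  MeasurableSet.biUnion (Finset.range k).countable_toSet fun j _ => Pmeas hm μ hca n j

lemma DDmono (n : ℕ) {k l : ℕ} (h : k ≤ l) : DD hm μ hca n k ⊆ DD hm μ hca n l := by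
  intro x hx
  obtain ⟨j, hj, hxj⟩ := Set.mem_iUnion₂.mp hx
  exact Set.mem_iUnion₂.mpr
    ⟨j, Finset.mem_range.mpr (lt_of_lt_of_le (Finset.mem_range.mp hj) h), hxj⟩

lemma DDdisjP (n k : ℕ) : Disjoint (DD hm μ hca n k) (P hm μ hca n k) := by
  rw [Set.disjoint_left]
  intro x hx hxP
  obtain ⟨j, hj, hxj⟩ := Set.mem_iUnion₂.mp hx
  have hjk : j ≠ k := by simp at hj; omega
  exact Set.disjoint_left.mp (Pdisj hm μ hca n j k hjk) hxj hxP

lemma DDce : ∀ k n, k ≤ 2^n →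
    ce (m1 := m1) μ (DD hm μ hca n k) =ᵐ[μ] fun _ => (k:ℝ)/2^n := by
  intro k
  induction k with
  | zero =>
    intro n _
    rw [DDzero, ce_empty hm μ]
    refine Eventually.of_forall fun ω => ?_
    simp
  | succ k ih =>
    intro n hk
    have h1 := ih n (by omega)
    have h2 := Pce hm μ hca n k (by omega)
    have h3 := ce_union hm μ (DDmeas hm μ hca n k) (Pmeas hm μ hca n k) (DDdisjP hm μ hca n k)
    rw [DDsucc]
    filter_upwards [h1, h2, h3] with ω hω1 hω2 hω3
    have hω3' : ce (m1 := m1) μ (DD hm μ hca n k ∪ P hm μ hca n k) ω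
        = ce (m1 := m1) μ (DD hm μ hca n k) ω + ce (m1 := m1) μ (P hm μ hca n k) ω := hω3
    rw [hω3', hω1, hω2]
    push_cast
    ring

lemma DDlevel : ∀ k n, DD hm μ hca (n+1) (2*k) = DD hm μ hca n k := by
  intro k
  induction k with
  | zero => intro n; simp [DDzero]
  | succ k ih =>
    intro n
    have h1 : 2*(k+1) = (2*k+1)+1 := by ring
    rw [h1, DDsucc, DDsucc, ih n, DDsucc, Set.union_assoc, Psplit_union]

lemma DDfull : ∀ n, DD hm μ hca n (2^n) = Set.univ := by
  intro n
  induction n with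
  | zero =>
    rw [pow_zero, show (1:ℕ) = 0+1 from rfl, DDsucc, DDzero]
    simp [P]
  | succ n ih =>
    have h1 : 2^(n+1) = 2 * 2^n := by rw [pow_succ]; ring
    rw [h1, DDlevel, ih]

lemma two_floor_le (x : ℝ) : 2 * ⌊x⌋₊ ≤ ⌊2 * x⌋₊ := by
  by_cases hx : 0 ≤ x
  · refine Nat.le_floor ?_
    push_cast
    nlinarith [Nat.floor_le hx]
  · rw [Nat.floor_of_nonpos (le_of_not_ge hx)]
    simp

noncomputable def BB (hca : CondAtomless m1 m2 μ) (t : ℝ) : Set Ω :=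
  ⋃ n, DD hm μ hca n ⌊t * 2^n⌋₊

lemma BBmono {s t : ℝ} (h : s ≤ t) : BB hm μ hca s ⊆ BB hm μ hca t := by
  refine Set.iUnion_mono fun n => DDmono hm μ hca n (Nat.floor_mono ?_)
  have : (0:ℝ) ≤ 2^n := by positivity
  nlinarith

lemma BBmeas (t : ℝ) : MeasurableSet[m2] (BB hm μ hca t) :=
  MeasurableSet.iUnion fun n => DDmeas hm μ hca n _

lemma BBnested (t : ℝ) : Monotone fun n => DD hm μ hca n ⌊t * 2^n⌋₊ := by
  refine monotone_nat_of_le_succ fun n => ?_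
  have h1 : DD hm μ hca n ⌊t * 2^n⌋₊ = DD hm μ hca (n+1) (2 * ⌊t * 2^n⌋₊) :=
    (DDlevel hm μ hca _ n).symm
  rw [h1]
  refine DDmono hm μ hca (n+1) ?_
  have h2 : t * 2^(n+1) = 2 * (t * 2^n) := by rw [pow_succ]; ring
  rw [h2]
  exact two_floor_le hm _

lemma floor_div_tendsto (t : ℝ) (ht : 0 ≤ t) :
    Tendsto (fun n : ℕ => (⌊t * 2^n⌋₊ : ℝ) / 2^n) atTop (nhds t) := by
  have h2 : Tendsto (fun n : ℕ => ((1:ℝ)/2)^n) atTop (nhds 0) :=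
    tendsto_pow_atTop_nhds_zero_of_lt_one (by norm_num) (by norm_num)
  have h3 : Tendsto (fun n : ℕ => t - ((1:ℝ)/2)^n) atTop (nhds t) := by
    have := (tendsto_const_nhds (x := t) (f := atTop (α := ℕ))).sub h2
    simpa using this
  refine tendsto_of_tendsto_of_tendsto_of_le_of_le h3 tendsto_const_nhds ?_ ?_
  · intro n
    have hp : (0:ℝ) < 2^n := by positivity
    have hlt := Nat.lt_floor_add_one (t * 2^n)
    show t - ((1:ℝ)/2)^n ≤ (⌊t * 2^n⌋₊ : ℝ) / 2^n
    rw [div_pow, one_pow, le_div_iff₀ hp]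
    have hexp : (t - 1/2^n) * (2:ℝ)^n = t * 2^n - 1 := by
      field_simp
    rw [hexp]
    linarith
  · intro n
    have hp : (0:ℝ) < 2^n := by positivity
    rw [div_le_iff₀ hp]
    exact Nat.floor_le (by positivity)

lemma BBce {t : ℝ} (ht : t ∈ Set.Icc (0:ℝ) 1) :
    ce (m1 := m1) μ (BB hm μ hca t) =ᵐ[μ] fun _ => t := by
  obtain ⟨ht0, ht1⟩ := ht
  have hfl : ∀ n : ℕ, ⌊t * 2^n⌋₊ ≤ 2^n := by
    intro n
    have hle : t * 2^n ≤ (2:ℝ)^n := by nlinarith [pow_pos (by norm_num : (0:ℝ) < 2) n]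
    calc ⌊t*2^n⌋₊ ≤ ⌊((2:ℝ)^n)⌋₊ := Nat.floor_mono hle
      _ = 2^n := by
          rw [show ((2:ℝ)^n) = ((2^n : ℕ) : ℝ) by push_cast; ring, Nat.floor_natCast]
  have hDce : ∀ n : ℕ, ce (m1 := m1) μ (DD hm μ hca n ⌊t * 2^n⌋₊) =ᵐ[μ]
      fun _ => (⌊t * 2^n⌋₊ : ℝ)/2^n := fun n => DDce hm μ hca _ n (hfl n)
  have hup : ce (m1 := m1) μ (BB hm μ hca t) ≤ᵐ[μ] fun _ => t := by
    refine ce_iUnion_le_aux hm μ _ (fun n => DDmeas hm μ hca n _) (BBnested hm μ hca t)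
      stronglyMeasurable_const (integrable_const t) (fun n => ?_)
    filter_upwards [hDce n] with ω h
    rw [h]
    have hp : (0:ℝ) < 2^n := by positivity
    show (⌊t * 2^n⌋₊ : ℝ)/2^n ≤ t
    rw [div_le_iff₀ hp]
    exact Nat.floor_le (by positivity)
  have hlow : (fun _ => t) ≤ᵐ[μ] ce (m1 := m1) μ (BB hm μ hca t) := by
    have hmono2 : ∀ n : ℕ, ce (m1 := m1) μ (DD hm μ hca n ⌊t * 2^n⌋₊) ≤ᵐ[μ]
        ce (m1 := m1) μ (BB hm μ hca t) := fun n =>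
      ce_mono hm μ (DDmeas hm μ hca n _) (BBmeas hm μ hca t)
        (Set.subset_iUnion (fun n => DD hm μ hca n ⌊t * 2^n⌋₊) n)
    have hall : ∀ᵐ ω ∂μ, ∀ n : ℕ,
        (⌊t * 2^n⌋₊ : ℝ)/2^n ≤ ce (m1 := m1) μ (BB hm μ hca t) ω := by
      rw [ae_all_iff]
      intro n
      filter_upwards [hDce n, hmono2 n] with ω h1 h2
      rw [← h1]
      exact h2
    filter_upwards [hall] with ω h
    exact le_of_tendsto (floor_div_tendsto hm t ht0) (Eventually.of_forall h)
  exact hup.antisymm hlow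

lemma BBval {t : ℝ} (ht : t ∈ Set.Icc (0:ℝ) 1) :
    μ (BB hm μ hca t) = ENNReal.ofReal t := by
  have h1 : (μ (BB hm μ hca t)).toReal = t := by
    rw [← integral_ce hm μ (BBmeas hm μ hca t), integral_congr_ae (BBce hm μ hca ht)]
    simp
  rw [← ENNReal.ofReal_toReal (measure_ne_top μ (BB hm μ hca t)), h1]

lemma BBuniv {t : ℝ} (ht : 1 ≤ t) : BB hm μ hca t = Set.univ := by
  refine Set.eq_univ_of_univ_subset ?_
  have h0 : (1:ℕ) ≤ ⌊t * 2^0⌋₊ := Nat.le_floor (by simpa using ht)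
  calc Set.univ = DD hm μ hca 0 1 := by
        have := DDfull hm μ hca 0
        rw [pow_zero] at this
        exact this.symm
    _ ⊆ DD hm μ hca 0 ⌊t * 2^0⌋₊ := DDmono hm μ hca 0 h0
    _ ⊆ BB hm μ hca t := Set.subset_iUnion (fun n => DD hm μ hca n ⌊t * 2^n⌋₊) 0

lemma BBneg {t : ℝ} (ht : t ≤ 0) : BB hm μ hca t = ∅ := by
  have hz : ∀ n : ℕ, ⌊t * 2^n⌋₊ = 0 := by
    intro n
    refine Nat.floor_of_nonpos ?_
    have : (0:ℝ) < 2^n := by positivity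
    nlinarith
  simp only [BB]
  refine Set.iUnion_eq_empty.mpr fun n => ?_
  rw [hz n]
  exact DDzero hm μ hca n

lemma BBle {t : ℝ} (ht : 0 ≤ t) : μ (BB hm μ hca t) ≤ ENNReal.ofReal t := by
  by_cases h1 : t ≤ 1
  · rw [BBval hm μ hca ⟨ht, h1⟩]
  · calc μ (BB hm μ hca t) ≤ 1 := prob_le_one
      _ = ENNReal.ofReal 1 := by simp
      _ ≤ ENNReal.ofReal t := ENNReal.ofReal_le_ofReal (by linarith)

lemma BBinterG {t : ℝ} (ht : t ∈ Set.Icc (0:ℝ) 1) {G : Set Ω} (hG : MeasurableSet[m1] G) :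
    μ (BB hm μ hca t ∩ G) = ENNReal.ofReal t * μ G := by
  have h1 : (μ (BB hm μ hca t ∩ G)).toReal = t * (μ G).toReal := by
    rw [← setIntegral_ce hm μ (BBmeas hm μ hca t) hG]
    have : ∫ ω in G, ce (m1 := m1) μ (BB hm μ hca t) ω ∂μ = ∫ _ω in G, t ∂μ :=
      integral_congr_ae (ae_restrict_of_ae (BBce hm μ hca ht))
    rw [this, setIntegral_const, smul_eq_mul, mul_comm, measureReal_def]
  have h2 : μ (BB hm μ hca t ∩ G) = ENNReal.ofReal (t * (μ G).toReal) := by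
    rw [← h1, ENNReal.ofReal_toReal (measure_ne_top μ _)]
  rw [h2, ENNReal.ofReal_mul ht.1, ENNReal.ofReal_toReal (measure_ne_top μ _)]

end CAux

open CAux

/-- If `F₂` is atomless conditionally to `F₁`, there is an increasing family
`(B_t)_{t ∈ [0,1]}` of `F₂`-measurable sets with `E[1_{B_t} | F₁] = t` a.s., whose generated
σ-algebra is independent of `F₁`, and an `F₂`-measurable random variable `U`, uniformly
distributed on `[0,1]` and independent of `F₁`, with `B_t = {U ≤ t}` up to null sets. -/
theorem stmt_6 {Ω : Type*} {m1 m2 : MeasurableSpace Ω} (hm : m1 ≤ m2)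
    (μ : @Measure Ω m2) [IsProbabilityMeasure μ]
    (hca : CondAtomless m1 m2 μ) :
    ∃ B : ℝ → Set Ω, ∃ U : Ω → ℝ,
      (∀ s t, 0 ≤ s → s ≤ t → t ≤ 1 → B s ⊆ B t) ∧
      (∀ t ∈ Set.Icc (0 : ℝ) 1, MeasurableSet[m2] (B t)) ∧
      (∀ t ∈ Set.Icc (0 : ℝ) 1,
        (μ[(B t).indicator (fun _ => (1 : ℝ)) | m1]) =ᵐ[μ] fun _ => t) ∧
      ProbabilityTheory.Indep
        (MeasurableSpace.generateFrom {S : Set Ω | ∃ t ∈ Set.Icc (0 : ℝ) 1, S = B t}) m1 μ ∧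
      Measurable[m2] U ∧
      μ.map U = (volume : Measure ℝ).restrict (Set.Icc 0 1) ∧
      ProbabilityTheory.Indep (MeasurableSpace.comap U Real.measurableSpace) m1 μ ∧
      ∀ t ∈ Set.Icc (0 : ℝ) 1, μ (symmDiff (B t) {ω | U ω ≤ t}) = 0 := by
  classical
  set B : ℝ → Set Ω := fun t => BB hm μ hca t with hBdef
  set U : Ω → ℝ := fun ω => sInf {t : ℝ | ω ∈ B t} with hUdef
  have hBmono : ∀ s t : ℝ, s ≤ t → B s ⊆ B t := fun s t h => BBmono hm μ hca h
  have hBmeas : ∀ t, MeasurableSet[m2] (B t) := fun t => BBmeas hm μ hca t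
  have hB1 : B 1 = Set.univ := BBuniv hm μ hca le_rfl
  have hBneg : ∀ t : ℝ, t < 0 → B t = ∅ := fun t ht => BBneg hm μ hca ht.le
  have hmem1 : ∀ ω, (1:ℝ) ∈ {t : ℝ | ω ∈ B t} := fun ω => by
    rw [Set.mem_setOf_eq, hB1]; trivial
  have hne : ∀ ω, {t : ℝ | ω ∈ B t}.Nonempty := fun ω => ⟨1, hmem1 ω⟩
  have hbdd : ∀ ω, BddBelow {t : ℝ | ω ∈ B t} := by
    intro ω
    refine ⟨0, fun t ht => ?_⟩
    by_contra hlt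
    push_neg at hlt
    rw [Set.mem_setOf_eq, hBneg t hlt] at ht
    exact ht
  have hU0 : ∀ ω, 0 ≤ U ω := by
    intro ω
    refine le_csInf (hne ω) fun t ht => ?_
    by_contra hlt
    push_neg at hlt
    rw [Set.mem_setOf_eq, hBneg t hlt] at ht
    exact ht
  have hU1 : ∀ ω, U ω ≤ 1 := fun ω => csInf_le (hbdd ω) (hmem1 ω)
  have hUle : ∀ (t : ℝ) ω, U ω ≤ t ↔ ∀ s, t < s → ω ∈ B s := by
    intro t ω
    constructor
    · intro h s hs
      obtain ⟨r, hr, hrs⟩ := exists_lt_of_csInf_lt (hne ω) (lt_of_le_of_lt h hs)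
      exact hBmono r s hrs.le hr
    · intro h
      refine le_of_forall_pos_le_add fun ε hε => ?_
      exact csInf_le (hbdd ω) (h (t+ε) (by linarith))
  have hUsetEq : ∀ t : ℝ, {ω | U ω ≤ t} = ⋂ n : ℕ, B (t + 1/(n+1)) := by
    intro t
    ext ω
    simp only [Set.mem_setOf_eq, Set.mem_iInter]
    constructor
    · intro h n
      refine (hUle t ω).mp h _ ?_
      have : (0:ℝ) < 1/((n:ℝ)+1) := by positivity
      linarith
    · intro h
      refine (hUle t ω).mpr fun s hs => ?_
      obtain ⟨n, hn⟩ := exists_nat_one_div_lt (sub_pos.mpr hs)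
      exact hBmono _ _ (by linarith) (h n)
  have hUmeas : Measurable[m2] U := by
    refine measurable_of_Iic (mδ := m2) (f := U) fun t => ?_
    rw [show U ⁻¹' (Set.Iic t) = {ω | U ω ≤ t} from rfl, hUsetEq t]
    exact MeasurableSet.iInter fun n => hBmeas _
  have hBsubU : ∀ t, B t ⊆ {ω | U ω ≤ t} := fun t ω hω =>
    (hUle t ω).mpr fun s hs => hBmono t s hs.le hω
  have hUnivset : ∀ t : ℝ, 1 ≤ t → {ω | U ω ≤ t} = Set.univ := fun t ht =>
    Set.eq_univ_of_forall fun ω => le_trans (hU1 ω) ht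
  have hEmptyset : ∀ t : ℝ, t < 0 → {ω | U ω ≤ t} = ∅ := by
    intro t ht
    refine Set.eq_empty_iff_forall_notMem.mpr fun ω hω => ?_
    have := hU0 ω
    have : U ω ≤ t := hω
    linarith [hU0 ω]
  have hUval : ∀ t ∈ Set.Icc (0:ℝ) 1, μ {ω | U ω ≤ t} = ENNReal.ofReal t := by
    intro t ht
    refine le_antisymm ?_ ?_
    · refine ENNReal.le_of_forall_pos_le_add fun ε hε _ => ?_
      obtain ⟨n, hn⟩ := exists_nat_one_div_lt (by exact_mod_cast hε : (0:ℝ) < (ε:ℝ))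
      have hδ : (0:ℝ) < 1/((n:ℝ)+1) := by positivity
      calc μ {ω | U ω ≤ t} ≤ μ (B (t + 1/((n:ℝ)+1))) := by
            refine measure_mono ?_
            rw [hUsetEq t]
            exact Set.iInter_subset _ n
        _ ≤ ENNReal.ofReal (t + 1/((n:ℝ)+1)) := BBle hm μ hca (by linarith [ht.1])
        _ = ENNReal.ofReal t + ENNReal.ofReal (1/((n:ℝ)+1)) := ENNReal.ofReal_add ht.1 hδ.le
        _ ≤ ENNReal.ofReal t + ε := by
            refine add_le_add le_rfl ?_
            rw [← ENNReal.ofReal_coe_nnreal]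
            exact ENNReal.ofReal_le_ofReal hn.le
    · rw [← BBval hm μ hca ht]
      exact measure_mono (hBsubU t)
  have hsd : ∀ t ∈ Set.Icc (0:ℝ) 1, μ (symmDiff (B t) {ω | U ω ≤ t}) = 0 := by
    intro t ht
    have h1 : symmDiff (B t) {ω | U ω ≤ t} = {ω | U ω ≤ t} \ B t := by
      rw [symmDiff_def]
      rw [show (B t \ {ω | U ω ≤ t}) = (∅ : Set Ω) from Set.diff_eq_empty.mpr (hBsubU t)]
      simp [Set.sup_eq_union]
    rw [h1]
    have hμdiff : μ ({ω | U ω ≤ t} \ B t) = μ {ω | U ω ≤ t} - μ (B t) :=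
      measure_diff (hBsubU t) (hBmeas t).nullMeasurableSet (measure_ne_top μ _)
    rw [hμdiff, hUval t ht, BBval hm μ hca ht]
    exact tsub_self _
  -- independence of the generated σ-algebra
  have hgen2 : m1 = MeasurableSpace.generateFrom {s : Set Ω | MeasurableSet[m1] s} :=
    (@MeasurableSpace.generateFrom_measurableSet Ω m1).symm
  have hpi2 : IsPiSystem {s : Set Ω | MeasurableSet[m1] s} := fun s hs t ht _ => hs.inter ht
  have hpi1 : IsPiSystem {S : Set Ω | ∃ t ∈ Set.Icc (0:ℝ) 1, S = B t} := by
    rintro S ⟨t1, ht1, rfl⟩ T ⟨t2, ht2, rfl⟩ _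
    refine ⟨min t1 t2, ⟨le_min ht1.1 ht2.1, (min_le_left _ _).trans ht1.2⟩, ?_⟩
    rcases le_total t1 t2 with h | h
    · rw [min_eq_left h, Set.inter_eq_self_of_subset_left (hBmono _ _ h)]
    · rw [min_eq_right h, Set.inter_eq_self_of_subset_right (hBmono _ _ h)]
  have hindepsets1 : ProbabilityTheory.IndepSets
      {S : Set Ω | ∃ t ∈ Set.Icc (0:ℝ) 1, S = B t} {s : Set Ω | MeasurableSet[m1] s} μ := by
    rw [ProbabilityTheory.IndepSets_iff]
    rintro S G ⟨t, ht, rfl⟩ hG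
    rw [BBinterG hm μ hca ht hG, BBval hm μ hca ht]
  have hindep1 : ProbabilityTheory.Indep
      (MeasurableSpace.generateFrom {S : Set Ω | ∃ t ∈ Set.Icc (0:ℝ) 1, S = B t}) m1 μ :=
    ProbabilityTheory.IndepSets.indep
      (MeasurableSpace.generateFrom_le (by rintro S ⟨t, ht, rfl⟩; exact hBmeas t)) hm
      hpi1 hpi2 rfl hgen2 hindepsets1
  -- independence of U
  have hcomap : MeasurableSpace.comap U Real.measurableSpace
      = MeasurableSpace.generateFrom {S : Set Ω | ∃ a : ℝ, S = U ⁻¹' (Set.Iic a)} := by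
    conv_lhs => rw [show (Real.measurableSpace) = borel ℝ from rfl,
      borel_eq_generateFrom_Iic ℝ, MeasurableSpace.comap_generateFrom]
    congr 1
    ext S
    constructor
    · rintro ⟨s, ⟨a, rfl⟩, rfl⟩
      exact ⟨a, rfl⟩
    · rintro ⟨a, rfl⟩
      exact ⟨Set.Iic a, ⟨a, rfl⟩, rfl⟩
  have hpi3 : IsPiSystem {S : Set Ω | ∃ a : ℝ, S = U ⁻¹' (Set.Iic a)} := by
    rintro S ⟨a, rfl⟩ T ⟨b, rfl⟩ _
    exact ⟨min a b, by rw [← Set.preimage_inter, Set.Iic_inter_Iic]⟩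
  have hindepsets3 : ProbabilityTheory.IndepSets
      {S : Set Ω | ∃ a : ℝ, S = U ⁻¹' (Set.Iic a)} {s : Set Ω | MeasurableSet[m1] s} μ := by
    rw [ProbabilityTheory.IndepSets_iff]
    rintro S G ⟨a, rfl⟩ hG
    have hpre : U ⁻¹' (Set.Iic a) = {ω | U ω ≤ a} := rfl
    rcases lt_or_ge a 0 with h | h
    · rw [hpre, hEmptyset a h]
      simp
    rcases le_or_gt a 1 with h1 | h1
    · have hae : ({ω | U ω ≤ a} : Set Ω) =ᵐ[μ] B a :=
        (measure_symmDiff_eq_zero_iff.mp (hsd a ⟨h, h1⟩)).symm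
      have hae2 : ({ω | U ω ≤ a} ∩ G : Set Ω) =ᵐ[μ] (B a ∩ G : Set Ω) :=
        hae.inter (Filter.EventuallyEq.refl _ _)
      rw [hpre, measure_congr hae2, measure_congr hae, BBinterG hm μ hca ⟨h, h1⟩ hG,
        BBval hm μ hca ⟨h, h1⟩]
    · rw [hpre, hUnivset a h1.le, Set.univ_inter, measure_univ, one_mul]
  have hindep2 : ProbabilityTheory.Indep (MeasurableSpace.comap U Real.measurableSpace) m1 μ :=
    ProbabilityTheory.IndepSets.indep (hUmeas.comap_le) hm hpi3 hpi2 hcomap hgen2 hindepsets3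
  -- the law of U
  haveI : IsFiniteMeasure ((volume : Measure ℝ).restrict (Set.Icc 0 1)) := by
    constructor
    rw [Measure.restrict_apply_univ, Real.volume_Icc]
    exact ENNReal.ofReal_lt_top
  haveI : IsProbabilityMeasure (μ.map U) := Measure.isProbabilityMeasure_map hUmeas.aemeasurable
  have hmap : μ.map U = (volume : Measure ℝ).restrict (Set.Icc 0 1) := by
    refine Measure.ext_of_Iic _ _ fun a => ?_
    rw [Measure.map_apply hUmeas measurableSet_Iic,
      show U ⁻¹' (Set.Iic a) = {ω | U ω ≤ a} from rfl,
      Measure.restrict_apply measurableSet_Iic]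
    rcases lt_or_ge a 0 with h | h
    · rw [hEmptyset a h]
      have he : Set.Iic a ∩ Set.Icc (0:ℝ) 1 = ∅ := by
        refine Set.eq_empty_iff_forall_notMem.mpr ?_
        rintro x ⟨hx1, hx2, _⟩
        simp only [Set.mem_Iic] at hx1
        linarith
      rw [he]
      simp
    rcases le_or_gt a 1 with h1 | h1
    · rw [hUval a ⟨h, h1⟩]
      have he : Set.Iic a ∩ Set.Icc (0:ℝ) 1 = Set.Icc 0 a := by
        ext x
        simp only [Set.mem_inter_iff, Set.mem_Iic, Set.mem_Icc]
        constructor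
        · rintro ⟨hx1, hx2, _⟩; exact ⟨hx2, hx1⟩
        · rintro ⟨hx1, hx2⟩; exact ⟨hx2, hx1, by linarith⟩
      rw [he, Real.volume_Icc]
      simp
    · rw [hUnivset a h1.le]
      have he : Set.Iic a ∩ Set.Icc (0:ℝ) 1 = Set.Icc 0 1 :=
        Set.inter_eq_self_of_subset_right fun x hx => le_trans hx.2 h1.le
      rw [he, Real.volume_Icc, measure_univ]
      simp
  exact ⟨B, U, fun s t _ hst _ => hBmono s t hst, fun t _ => hBmeas t,
    fun t ht => BBce hm μ hca ht, hindep1, hUmeas, hmap, hindep2, hsd⟩
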